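/- arXiv:1304.2318 — 6 statements merged into one kernel-verified Lean document; each statement's English description precedes it below -/
import Mathlib

section
/- Assume y₀ and y₁ are differentiable on (0,∞) and satisfy the Bessel recurrences y₀′(s) = −y₁(s) and y₁′(s) = y₀(s) − y₁(s)/s for all s > 0. Then for every integer N ≥ 1, the pair (P_N, α_N) satisfies the first Gowdy constraint: ∂α_N/∂τ (τ,θ) = (∂P_N/∂τ (τ,θ))² + e^{−2τ}·(∂P_N/∂θ (τ,θ))² for all (τ,θ) ∈ ℝ². -/
/-- The Gowdy wave `P_N(τ,θ) = (A/√N)·y₀(N·e^{−τ})·sin(N·θ)` (in the paper `y₀ = J₀`). -/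
noncomputable def P_N (A : ℝ) (y₀ : ℝ → ℝ) (N : ℕ) (τ θ : ℝ) : ℝ :=
  (A / Real.sqrt N) * y₀ ((N : ℝ) * Real.exp (-τ)) * Real.sin ((N : ℝ) * θ)

/-- `y₂(s) = (2/s)·y₁(s) − y₀(s)` (in the paper, the Bessel recurrence giving `J₂`). -/
noncomputable def y₂fun (y₀ y₁ : ℝ → ℝ) (s : ℝ) : ℝ := (2 / s) * y₁ s - y₀ s

/-- The Gowdy metric function
`α_N(τ,θ) = −(A²e^{−τ}/2)·y₁(Ne^{−τ})·y₀(Ne^{−τ})·cos(2Nθ)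
            − (A²Ne^{−2τ}/4)·[y₀(Ne^{−τ})² + 2y₁(Ne^{−τ})² − y₀(Ne^{−τ})·y₂(Ne^{−τ})]`. -/
noncomputable def α_N (A : ℝ) (y₀ y₁ : ℝ → ℝ) (N : ℕ) (τ θ : ℝ) : ℝ :=
  -(A ^ 2 * Real.exp (-τ) / 2) * y₁ ((N : ℝ) * Real.exp (-τ)) * y₀ ((N : ℝ) * Real.exp (-τ))
      * Real.cos (2 * (N : ℝ) * θ)
    - (A ^ 2 * (N : ℝ) * Real.exp (-2 * τ) / 4) *
        ((y₀ ((N : ℝ) * Real.exp (-τ))) ^ 2 + 2 * (y₁ ((N : ℝ) * Real.exp (-τ))) ^ 2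
          - y₀ ((N : ℝ) * Real.exp (-τ)) * y₂fun y₀ y₁ ((N : ℝ) * Real.exp (-τ)))

/-- If `y₀, y₁` satisfy the Bessel recurrences `y₀′ = −y₁` and
`y₁′(s) = y₀(s) − y₁(s)/s` on `(0,∞)`, then for every `N ≥ 1` the pair `(P_N, α_N)`
satisfies the first Gowdy constraint
`∂α_N/∂τ = (∂P_N/∂τ)² + e^{−2τ}(∂P_N/∂θ)²` at every `(τ,θ)`. -/
theorem gowdy_first_constraint (A : ℝ) (hA : 0 < A) (y₀ y₁ : ℝ → ℝ)
    (hy₀ : ∀ s > (0:ℝ), HasDerivAt y₀ (-y₁ s) s)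
    (hy₁ : ∀ s > (0:ℝ), HasDerivAt y₁ (y₀ s - y₁ s / s) s)
    (N : ℕ) (hN : 1 ≤ N) (τ θ : ℝ) :
    deriv (fun t : ℝ => α_N A y₀ y₁ N t θ) τ
      = (deriv (fun t : ℝ => P_N A y₀ N t θ) τ) ^ 2
        + Real.exp (-2 * τ) * (deriv (fun s : ℝ => P_N A y₀ N τ s) θ) ^ 2 := by
  have hNpos : (0:ℝ) < (N:ℝ) := by exact_mod_cast hN
  set s : ℝ := (N:ℝ) * Real.exp (-τ) with hs_def
  have hspos : 0 < s := by positivity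
  have hsne : s ≠ 0 := ne_of_gt hspos
  -- derivative of inner function
  have hEm : HasDerivAt (fun t : ℝ => Real.exp (-t)) (-Real.exp (-τ)) τ := by
    exact ((Real.hasDerivAt_exp (-τ)).comp τ (hasDerivAt_neg τ)).congr_deriv (by ring)
  have hE : HasDerivAt (fun t : ℝ => (N:ℝ) * Real.exp (-t)) (-s) τ := by
    simpa [hs_def, mul_neg, mul_comm] using hEm.const_mul (N:ℝ)
  have hE2 : HasDerivAt (fun t : ℝ => Real.exp (-2 * t)) (-2 * Real.exp (-2 * τ)) τ := by
    have h := (Real.hasDerivAt_exp (-2 * τ)).comp τ ((hasDerivAt_id τ).const_mul (-2))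
    exact h.congr_deriv (by ring)
  have hY0 : HasDerivAt (fun t : ℝ => y₀ ((N:ℝ) * Real.exp (-t))) (s * y₁ s) τ := by
    have h := (hy₀ s hspos).comp τ hE
    exact h.congr_deriv (by ring)
  have hY1 : HasDerivAt (fun t : ℝ => y₁ ((N:ℝ) * Real.exp (-t)))
      ((y₀ s - y₁ s / s) * (-s)) τ := (hy₁ s hspos).comp τ hE
  -- derivative of α_N in τ
  have hα : HasDerivAt (fun t : ℝ => α_N A y₀ y₁ N t θ)
      ( -(A ^ 2 / 2) * Real.cos (2 * (N:ℝ) * θ) *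
          ((-Real.exp (-τ)) * (y₁ s * y₀ s)
            + Real.exp (-τ) * (((y₀ s - y₁ s / s) * (-s)) * y₀ s + y₁ s * (s * y₁ s)))
        - (A ^ 2 * (N:ℝ) / 4) *
          ((-2 * Real.exp (-2*τ)) *
              ((y₀ s) ^ 2 + 2 * (y₁ s) ^ 2 - y₀ s * ((2 / s) * y₁ s - y₀ s))
            + Real.exp (-2*τ) *
              (2 * y₀ s * (s * y₁ s) + 2 * (2 * y₁ s * ((y₀ s - y₁ s / s) * (-s)))
                - ((s * y₁ s) * ((2/s) * y₁ s - y₀ s)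
                   + y₀ s * (((2 * ((y₀ s - y₁ s / s) * (-s))) * s - (2 * y₁ s) * (-s)) / s^2
                     - (s * y₁ s))))) ) τ := by
    have h1 : HasDerivAt (fun t : ℝ =>
        Real.exp (-t) * (y₁ ((N:ℝ) * Real.exp (-t)) * y₀ ((N:ℝ) * Real.exp (-t))))
        ((-Real.exp (-τ)) * (y₁ s * y₀ s)
          + Real.exp (-τ) * (((y₀ s - y₁ s / s) * (-s)) * y₀ s + y₁ s * (s * y₁ s))) τ :=
      hEm.mul (hY1.mul hY0)
    have hQinner : HasDerivAt (fun t : ℝ => 2 * y₁ ((N:ℝ) * Real.exp (-t)) / ((N:ℝ) * Real.exp (-t)))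
        (((2 * ((y₀ s - y₁ s / s) * (-s))) * s - (2 * y₁ s) * (-s)) / s^2) τ :=
      (hY1.const_mul 2).div hE hsne
    have hQ : HasDerivAt (fun t : ℝ =>
        (y₀ ((N:ℝ) * Real.exp (-t))) ^ 2 + 2 * (y₁ ((N:ℝ) * Real.exp (-t))) ^ 2
          - y₀ ((N:ℝ) * Real.exp (-t)) *
            ((2 / ((N:ℝ) * Real.exp (-t))) * y₁ ((N:ℝ) * Real.exp (-t))
              - y₀ ((N:ℝ) * Real.exp (-t))))
        (2 * y₀ s * (s * y₁ s) + 2 * (2 * y₁ s * ((y₀ s - y₁ s / s) * (-s)))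
          - ((s * y₁ s) * ((2/s) * y₁ s - y₀ s)
             + y₀ s * (((2 * ((y₀ s - y₁ s / s) * (-s))) * s - (2 * y₁ s) * (-s)) / s^2
               - (s * y₁ s)))) τ := by
      have hsq0 : HasDerivAt (fun t : ℝ => (y₀ ((N:ℝ) * Real.exp (-t)))^2)
          (2 * y₀ s * (s * y₁ s)) τ := by
        have h := hY0.pow 2
        exact h.congr_deriv (by ring)
      have hsq1 : HasDerivAt (fun t : ℝ => 2 * (y₁ ((N:ℝ) * Real.exp (-t)))^2)
          (2 * (2 * y₁ s * ((y₀ s - y₁ s / s) * (-s)))) τ := by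
        have h := (hY1.pow 2).const_mul 2
        exact h.congr_deriv (by ring)
      have hprod : HasDerivAt (fun t : ℝ =>
          y₀ ((N:ℝ) * Real.exp (-t)) *
            ((2 / ((N:ℝ) * Real.exp (-t))) * y₁ ((N:ℝ) * Real.exp (-t))
              - y₀ ((N:ℝ) * Real.exp (-t))))
          ((s * y₁ s) * ((2/s) * y₁ s - y₀ s)
            + y₀ s * (((2 * ((y₀ s - y₁ s / s) * (-s))) * s - (2 * y₁ s) * (-s)) / s^2
              - (s * y₁ s))) τ := by
        have hsub : HasDerivAt (fun t : ℝ =>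
            (2 / ((N:ℝ) * Real.exp (-t))) * y₁ ((N:ℝ) * Real.exp (-t))
              - y₀ ((N:ℝ) * Real.exp (-t)))
            (((2 * ((y₀ s - y₁ s / s) * (-s))) * s - (2 * y₁ s) * (-s)) / s^2 - (s * y₁ s)) τ := by
          have h2 : (fun t : ℝ => (2 / ((N:ℝ) * Real.exp (-t))) * y₁ ((N:ℝ) * Real.exp (-t)))
              = fun t : ℝ => 2 * y₁ ((N:ℝ) * Real.exp (-t)) / ((N:ℝ) * Real.exp (-t)) := by
            funext t; ring
          rw [← h2] at hQinner
          exact hQinner.sub hY0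
        exact hY0.mul hsub
      exact (hsq0.add hsq1).sub hprod
    have hterm1 : HasDerivAt (fun t : ℝ =>
        -(A ^ 2 * Real.exp (-t) / 2) * y₁ ((N:ℝ) * Real.exp (-t)) * y₀ ((N:ℝ) * Real.exp (-t))
          * Real.cos (2 * (N:ℝ) * θ))
        (-(A ^ 2 / 2) * Real.cos (2 * (N:ℝ) * θ) *
          ((-Real.exp (-τ)) * (y₁ s * y₀ s)
            + Real.exp (-τ) * (((y₀ s - y₁ s / s) * (-s)) * y₀ s + y₁ s * (s * y₁ s)))) τ := by
      have heq : (fun t : ℝ =>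
          -(A ^ 2 * Real.exp (-t) / 2) * y₁ ((N:ℝ) * Real.exp (-t)) * y₀ ((N:ℝ) * Real.exp (-t))
            * Real.cos (2 * (N:ℝ) * θ))
          = fun t : ℝ => (-(A ^ 2 / 2) * Real.cos (2 * (N:ℝ) * θ)) *
              (Real.exp (-t) * (y₁ ((N:ℝ) * Real.exp (-t)) * y₀ ((N:ℝ) * Real.exp (-t)))) := by
        funext t; ring
      rw [heq]
      exact h1.const_mul _
    have hterm2 : HasDerivAt (fun t : ℝ =>
        (A ^ 2 * (N:ℝ) * Real.exp (-2 * t) / 4) *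
          ((y₀ ((N:ℝ) * Real.exp (-t))) ^ 2 + 2 * (y₁ ((N:ℝ) * Real.exp (-t))) ^ 2
            - y₀ ((N:ℝ) * Real.exp (-t)) *
              ((2 / ((N:ℝ) * Real.exp (-t))) * y₁ ((N:ℝ) * Real.exp (-t))
                - y₀ ((N:ℝ) * Real.exp (-t)))))
        ((A ^ 2 * (N:ℝ) / 4) *
          ((-2 * Real.exp (-2*τ)) *
              ((y₀ s) ^ 2 + 2 * (y₁ s) ^ 2 - y₀ s * ((2 / s) * y₁ s - y₀ s))
            + Real.exp (-2*τ) *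
              (2 * y₀ s * (s * y₁ s) + 2 * (2 * y₁ s * ((y₀ s - y₁ s / s) * (-s)))
                - ((s * y₁ s) * ((2/s) * y₁ s - y₀ s)
                   + y₀ s * (((2 * ((y₀ s - y₁ s / s) * (-s))) * s - (2 * y₁ s) * (-s)) / s^2
                     - (s * y₁ s)))))) τ := by
      have heq : (fun t : ℝ =>
          (A ^ 2 * (N:ℝ) * Real.exp (-2 * t) / 4) *
            ((y₀ ((N:ℝ) * Real.exp (-t))) ^ 2 + 2 * (y₁ ((N:ℝ) * Real.exp (-t))) ^ 2
              - y₀ ((N:ℝ) * Real.exp (-t)) *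
                ((2 / ((N:ℝ) * Real.exp (-t))) * y₁ ((N:ℝ) * Real.exp (-t))
                  - y₀ ((N:ℝ) * Real.exp (-t)))))
          = fun t : ℝ => (A ^ 2 * (N:ℝ) / 4) *
              (Real.exp (-2 * t) *
                ((y₀ ((N:ℝ) * Real.exp (-t))) ^ 2 + 2 * (y₁ ((N:ℝ) * Real.exp (-t))) ^ 2
                  - y₀ ((N:ℝ) * Real.exp (-t)) *
                    ((2 / ((N:ℝ) * Real.exp (-t))) * y₁ ((N:ℝ) * Real.exp (-t))
                      - y₀ ((N:ℝ) * Real.exp (-t))))) := by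
        funext t; ring
      rw [heq]
      exact (hE2.mul hQ).const_mul _
    have h := hterm1.sub hterm2
    exact h
  -- derivative of P_N in τ
  have hPτ : HasDerivAt (fun t : ℝ => P_N A y₀ N t θ)
      ((A / Real.sqrt N) * (s * y₁ s) * Real.sin ((N:ℝ) * θ)) τ := by
    have h := (hY0.const_mul (A / Real.sqrt N)).mul_const (Real.sin ((N:ℝ) * θ))
    have heq : (fun t : ℝ => P_N A y₀ N t θ)
        = fun t : ℝ => (A / Real.sqrt N) * y₀ ((N:ℝ) * Real.exp (-t)) * Real.sin ((N:ℝ) * θ) := by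
      funext t; rfl
    rw [heq]
    convert h using 1
  -- derivative of P_N in θ
  have hPθ : HasDerivAt (fun x : ℝ => P_N A y₀ N τ x)
      ((A / Real.sqrt N) * y₀ s * ((N:ℝ) * Real.cos ((N:ℝ) * θ))) θ := by
    have hsin : HasDerivAt (fun x : ℝ => Real.sin ((N:ℝ) * x)) ((N:ℝ) * Real.cos ((N:ℝ) * θ)) θ := by
      have h := (Real.hasDerivAt_sin ((N:ℝ) * θ)).comp θ ((hasDerivAt_id θ).const_mul (N:ℝ))
      exact h.congr_deriv (by ring)
    have h := hsin.const_mul ((A / Real.sqrt N) * y₀ s)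
    have heq : (fun x : ℝ => P_N A y₀ N τ x)
        = fun x : ℝ => (A / Real.sqrt N) * y₀ s * Real.sin ((N:ℝ) * x) := by
      funext x; rfl
    rw [heq]
    convert h using 1
  rw [hα.deriv, hPτ.deriv, hPθ.deriv]
  -- algebra
  have hNne : ((N:ℝ)) ≠ 0 := ne_of_gt hNpos
  have hsq : Real.sqrt (N:ℝ) ^ 2 = (N:ℝ) := Real.sq_sqrt hNpos.le
  have hr : (A / Real.sqrt (N:ℝ)) ^ 2 = A ^ 2 / (N:ℝ) := by rw [div_pow, hsq]
  have hexp2 : Real.exp (-2 * τ) = Real.exp (-τ) ^ 2 := by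
    rw [show (-2 : ℝ) * τ = (-τ) + (-τ) by ring, Real.exp_add]; ring
  have hcos2 : Real.cos (2 * (N:ℝ) * θ) = 1 - 2 * Real.sin ((N:ℝ) * θ) ^ 2 := by
    rw [show 2 * (N:ℝ) * θ = 2 * ((N:ℝ) * θ) by ring, Real.cos_two_mul, Real.cos_sq']; ring
  have hpy : Real.cos ((N:ℝ) * θ) ^ 2 = 1 - Real.sin ((N:ℝ) * θ) ^ 2 := by
    rw [Real.cos_sq']
  have h1 : (A / Real.sqrt (N:ℝ) * (s * y₁ s) * Real.sin ((N:ℝ) * θ)) ^ 2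
      = A ^ 2 / (N:ℝ) * ((s * y₁ s) ^ 2 * Real.sin ((N:ℝ) * θ) ^ 2) := by
    have e : (A / Real.sqrt (N:ℝ) * (s * y₁ s) * Real.sin ((N:ℝ) * θ)) ^ 2
        = (A / Real.sqrt (N:ℝ)) ^ 2 * ((s * y₁ s) ^ 2 * Real.sin ((N:ℝ) * θ) ^ 2) := by ring
    rw [e, hr]
  have h2 : (A / Real.sqrt (N:ℝ) * y₀ s * ((N:ℝ) * Real.cos ((N:ℝ) * θ))) ^ 2
      = A ^ 2 / (N:ℝ) * ((y₀ s) ^ 2 * (N:ℝ) ^ 2 * (1 - Real.sin ((N:ℝ) * θ) ^ 2)) := by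
    have e : (A / Real.sqrt (N:ℝ) * y₀ s * ((N:ℝ) * Real.cos ((N:ℝ) * θ))) ^ 2
        = (A / Real.sqrt (N:ℝ)) ^ 2 * ((y₀ s) ^ 2 * (N:ℝ) ^ 2 * Real.cos ((N:ℝ) * θ) ^ 2) := by
      ring
    rw [e, hr, hpy]
  rw [h1, h2, hcos2, hexp2, hs_def]
  have hEne : Real.exp (-τ) ≠ 0 := Real.exp_ne_zero _
  field_simp
  ring
end

section
/- Assume y₀ and y₁ are differentiable on (0,∞) and satisfy the Bessel recurrences y₀′(s) = −y₁(s) and y₁′(s) = y₀(s) − y₁(s)/s for all s > 0. Then for every integer N ≥ 1, the pair (P_N, α_N) satisfies the second Gowdy constraint: ∂α_N/∂θ (τ,θ) = 2·(∂P_N/∂θ (τ,θ))·(∂P_N/∂τ (τ,θ)) for all (τ,θ) ∈ ℝ². -/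
/-- If `y₀, y₁` satisfy the Bessel recurrences `y₀′ = −y₁` and
`y₁′(s) = y₀(s) − y₁(s)/s` on `(0,∞)`, then for every `N ≥ 1` the pair `(P_N, α_N)`
satisfies the second Gowdy constraint
`∂α_N/∂θ = 2·(∂P_N/∂θ)·(∂P_N/∂τ)` at every `(τ,θ)`. -/
theorem gowdy_second_constraint (A : ℝ) (hA : 0 < A) (y₀ y₁ : ℝ → ℝ)
    (hy₀ : ∀ s > (0:ℝ), HasDerivAt y₀ (-y₁ s) s)
    (hy₁ : ∀ s > (0:ℝ), HasDerivAt y₁ (y₀ s - y₁ s / s) s)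
    (N : ℕ) (hN : 1 ≤ N) (τ θ : ℝ) :
    deriv (fun s : ℝ => α_N A y₀ y₁ N τ s) θ
      = 2 * (deriv (fun s : ℝ => P_N A y₀ N τ s) θ)
          * (deriv (fun t : ℝ => P_N A y₀ N t θ) τ) := by

  set x : ℝ := (N : ℝ) * Real.exp (-τ) with hx
  have hNpos : (0:ℝ) < (N:ℝ) := by exact_mod_cast Nat.lt_of_lt_of_le Nat.zero_lt_one hN
  have hxpos : 0 < x := mul_pos hNpos (Real.exp_pos _)
  have hsN : Real.sqrt N ≠ 0 := by positivity
  -- derivative of α in θ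
  have hcos : HasDerivAt (fun s : ℝ => Real.cos (2 * (N:ℝ) * s))
      (-Real.sin (2 * (N:ℝ) * θ) * (2 * (N:ℝ) * 1)) θ :=
    ((hasDerivAt_id θ).const_mul (2 * (N:ℝ))).cos
  have hα : HasDerivAt (fun s : ℝ => α_N A y₀ y₁ N τ s)
      ((-(A ^ 2 * Real.exp (-τ) / 2) * y₁ x * y₀ x) * (-Real.sin (2 * (N:ℝ) * θ) * (2 * (N:ℝ) * 1))) θ := by
    unfold α_N
    exact (hcos.const_mul _).sub_const _
  -- derivative of P in θ
  have hsin : HasDerivAt (fun s : ℝ => Real.sin ((N:ℝ) * s))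
      (Real.cos ((N:ℝ) * θ) * ((N:ℝ) * 1)) θ :=
    ((hasDerivAt_id θ).const_mul (N:ℝ)).sin
  have hPθ : HasDerivAt (fun s : ℝ => P_N A y₀ N τ s)
      ((A / Real.sqrt N * y₀ x) * (Real.cos ((N:ℝ) * θ) * ((N:ℝ) * 1))) θ := by
    unfold P_N
    exact hsin.const_mul _
  -- derivative of P in τ
  have hinner : HasDerivAt (fun t : ℝ => (N:ℝ) * Real.exp (-t)) ((N:ℝ) * (Real.exp (-τ) * (-1))) τ :=
    (hasDerivAt_neg τ).exp.const_mul (N:ℝ)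
  have hPτ : HasDerivAt (fun t : ℝ => P_N A y₀ N t θ)
      ((A / Real.sqrt N * ((-y₁ x) * ((N:ℝ) * (Real.exp (-τ) * (-1))))) * Real.sin ((N:ℝ) * θ)) τ := by
    unfold P_N
    exact ((((hy₀ x hxpos).comp τ hinner)).const_mul _).mul_const _
  rw [hα.deriv, hPθ.deriv, hPτ.deriv]
  have hsq : Real.sqrt N * Real.sqrt N = (N:ℝ) := Real.mul_self_sqrt (by positivity)
  rw [show (2:ℝ) * (N:ℝ) * θ = 2 * ((N:ℝ) * θ) by ring, Real.sin_two_mul]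
  field_simp
  rw [Real.sq_sqrt hNpos.le]
  nlinarith [hsq, sq_nonneg (Real.sqrt (N:ℝ)),
    mul_pos hNpos (Real.exp_pos (-τ))]
end

section
/- Assume y₀ is differentiable on (0,∞) with y₀′(s) = −y₁(s), and assume there is a constant C > 0 such that |y₀(s)| ≤ C·s^{−1/2} and |y₁(s)| ≤ C·s^{−1/2} for all s ≥ 1. Then for every integer N ≥ 1 and every (τ,θ) with N·e^{−τ} ≥ 1: |∂P_N/∂θ (τ,θ)| ≤ A·C·e^{τ/2} and |∂P_N/∂τ (τ,θ)| ≤ A·C·e^{−τ/2}. In particular, on every compact subset of ℝ² the first derivatives of P_N are bounded uniformly in N (but do not tend to zero). -/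
/-- If `y₀′ = −y₁` on `(0,∞)` and `|y₀(s)|, |y₁(s)| ≤ C·s^{−1/2}` for
`s ≥ 1`, then for every `N ≥ 1` and every `(τ,θ)` with `N·e^{−τ} ≥ 1` the first
derivatives of `P_N` obey `|∂P_N/∂θ| ≤ A·C·e^{τ/2}` and `|∂P_N/∂τ| ≤ A·C·e^{−τ/2}`. -/
theorem P_N_derivatives_bounded (A C : ℝ) (hA : 0 < A) (hC : 0 < C) (y₀ y₁ : ℝ → ℝ)
    (hy₀ : ∀ s > (0:ℝ), HasDerivAt y₀ (-y₁ s) s)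
    (hb₀ : ∀ s : ℝ, 1 ≤ s → |y₀ s| ≤ C * s ^ (-(1:ℝ)/2))
    (hb₁ : ∀ s : ℝ, 1 ≤ s → |y₁ s| ≤ C * s ^ (-(1:ℝ)/2))
    (N : ℕ) (hN : 1 ≤ N) (τ θ : ℝ) (h : 1 ≤ (N : ℝ) * Real.exp (-τ)) :
    |deriv (fun s : ℝ => P_N A y₀ N τ s) θ| ≤ A * C * Real.exp (τ / 2) ∧
    |deriv (fun t : ℝ => P_N A y₀ N t θ) τ| ≤ A * C * Real.exp (-τ / 2) := by
  set s : ℝ := (N : ℝ) * Real.exp (-τ) with hs_def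
  have hNpos : (0:ℝ) < N := by exact_mod_cast Nat.lt_of_lt_of_le Nat.zero_lt_one hN
  have hspos : (0:ℝ) < s := lt_of_lt_of_le one_pos h
  have hsqrtN : (0:ℝ) < Real.sqrt N := Real.sqrt_pos.mpr hNpos
  have hsqrtNsq : Real.sqrt N * Real.sqrt N = (N:ℝ) := Real.mul_self_sqrt (le_of_lt hNpos)
  -- s^(−1/2) = 1 / √s  and √s = √N * e^{−τ/2}
  have hsqrts : Real.sqrt s = Real.sqrt N * Real.exp (-τ/2) := by
    rw [hs_def, Real.sqrt_mul (le_of_lt hNpos)]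
    congr 1
    rw [show Real.exp (-τ) = Real.exp (-τ/2) * Real.exp (-τ/2) by
      rw [← Real.exp_add]; ring_nf]
    exact Real.sqrt_mul_self (Real.exp_nonneg _)
  have hrpow : s ^ (-(1:ℝ)/2) = (Real.sqrt s)⁻¹ := by
    rw [show (-(1:ℝ)/2) = -(1/2) by ring, Real.rpow_neg (le_of_lt hspos),
      ← Real.sqrt_eq_rpow]
  have hsqrts_pos : (0:ℝ) < Real.sqrt s := Real.sqrt_pos.mpr hspos
  constructor
  · -- θ derivative
    have h1 : HasDerivAt (fun x : ℝ => (N:ℝ) * x) (N:ℝ) θ := by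
      simpa using (hasDerivAt_id θ).const_mul (N:ℝ)
    have hsin : HasDerivAt (fun x : ℝ => Real.sin ((N:ℝ) * x))
        (Real.cos ((N:ℝ) * θ) * N) θ := (Real.hasDerivAt_sin _).comp θ h1
    have hD : HasDerivAt (fun x : ℝ => P_N A y₀ N τ x)
        ((A / Real.sqrt N * y₀ s) * (Real.cos ((N:ℝ) * θ) * N)) θ := by
      simpa [P_N, mul_assoc] using hsin.const_mul (A / Real.sqrt N * y₀ s)
    rw [hD.deriv]
    have hy0 := hb₀ s h
    rw [hrpow, hsqrts] at hy0
    have hcos : |Real.cos ((N:ℝ) * θ)| ≤ 1 := Real.abs_cos_le_one _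
    have : |A / Real.sqrt N * y₀ s * (Real.cos ((N:ℝ) * θ) * N)|
        = A / Real.sqrt N * |y₀ s| * (|Real.cos ((N:ℝ) * θ)| * N) := by
      rw [abs_mul, abs_mul, abs_mul, abs_of_pos (div_pos hA hsqrtN),
        abs_of_pos hNpos]
    rw [this]
    have key : A / Real.sqrt N * (C * (Real.sqrt N * Real.exp (-τ/2))⁻¹) * (1 * N)
        = A * C * Real.exp (τ/2) := by
      rw [mul_inv, show (Real.exp (-τ/2))⁻¹ = Real.exp (τ/2) by
        rw [show -τ/2 = -(τ/2) by ring, Real.exp_neg, inv_inv], one_mul, ← hsqrtNsq]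
      field_simp
      ring_nf; rw [Real.sqrt_sq hsqrtN.le]
    calc A / Real.sqrt N * |y₀ s| * (|Real.cos ((N:ℝ) * θ)| * N)
        ≤ A / Real.sqrt N * (C * (Real.sqrt N * Real.exp (-τ/2))⁻¹) * (1 * N) := by
          apply mul_le_mul
          · exact mul_le_mul_of_nonneg_left hy0 (le_of_lt (div_pos hA hsqrtN))
          · exact mul_le_mul_of_nonneg_right hcos (le_of_lt hNpos)
          · positivity
          · positivity
      _ = A * C * Real.exp (τ/2) := key
  · -- τ derivative
    have hg : HasDerivAt (fun t : ℝ => (N:ℝ) * Real.exp (-t))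
        ((N:ℝ) * (Real.exp (-τ) * (-1))) τ := by
      have hneg : HasDerivAt (fun t : ℝ => -t) (-1:ℝ) τ := (hasDerivAt_id τ).neg
      exact ((Real.hasDerivAt_exp (-τ)).comp τ hneg).const_mul (N:ℝ)
    have hcomp : HasDerivAt (fun t : ℝ => y₀ ((N:ℝ) * Real.exp (-t)))
        ((-y₁ s) * ((N:ℝ) * (Real.exp (-τ) * (-1)))) τ :=
      (hy₀ s hspos).comp τ hg
    have hD : HasDerivAt (fun t : ℝ => P_N A y₀ N t θ)
        ((A / Real.sqrt N) * ((-y₁ s) * ((N:ℝ) * (Real.exp (-τ) * (-1)))) *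
          Real.sin ((N:ℝ) * θ)) τ := by
      simpa [P_N, mul_assoc] using (hcomp.const_mul (A / Real.sqrt N)).mul_const
        (Real.sin ((N:ℝ) * θ))
    rw [hD.deriv]
    have hy1 := hb₁ s h
    rw [hrpow, hsqrts] at hy1
    have hsinb : |Real.sin ((N:ℝ) * θ)| ≤ 1 := Real.abs_sin_le_one _
    have habs : |A / Real.sqrt N * (-y₁ s * ((N:ℝ) * (Real.exp (-τ) * (-1)))) *
        Real.sin ((N:ℝ) * θ)|
        = A / Real.sqrt N * (|y₁ s| * ((N:ℝ) * Real.exp (-τ))) *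
          |Real.sin ((N:ℝ) * θ)| := by
      rw [abs_mul, abs_mul, abs_mul, abs_mul, abs_mul, abs_neg, abs_neg,
        abs_of_pos (div_pos hA hsqrtN), abs_of_pos hNpos,
        abs_of_pos (Real.exp_pos _), abs_one, mul_one]
    rw [habs]
    have key : A / Real.sqrt N * ((C * (Real.sqrt N * Real.exp (-τ/2))⁻¹) *
        ((N:ℝ) * Real.exp (-τ))) * 1 = A * C * Real.exp (-τ/2) := by
      have hNe : (N:ℝ) * Real.exp (-τ)
          = (Real.sqrt N * Real.exp (-τ/2)) * (Real.sqrt N * Real.exp (-τ/2)) := by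
        rw [mul_mul_mul_comm, hsqrtNsq, ← Real.exp_add]; ring_nf
      have hX : Real.sqrt N * Real.exp (-τ/2) ≠ 0 := by positivity
      rw [hNe, mul_one, mul_assoc C, inv_mul_cancel_left₀ hX]
      field_simp
    calc A / Real.sqrt N * (|y₁ s| * ((N:ℝ) * Real.exp (-τ))) * |Real.sin ((N:ℝ) * θ)|
        ≤ A / Real.sqrt N * ((C * (Real.sqrt N * Real.exp (-τ/2))⁻¹) *
            ((N:ℝ) * Real.exp (-τ))) * 1 := by
          apply mul_le_mul
          · apply mul_le_mul_of_nonneg_left _ (le_of_lt (div_pos hA hsqrtN))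
            exact mul_le_mul_of_nonneg_right hy1 (by positivity)
          · exact hsinb
          · exact abs_nonneg _
          · positivity
      _ = A * C * Real.exp (-τ/2) := key
end

section
/- Assume there is a constant C > 0 such that for all s ≥ 1, |y₀(s) − √(2/(πs))·cos(s − π/4)| ≤ C·s^{−3/2} and |y₁(s) − √(2/(πs))·sin(s − π/4)| ≤ C·s^{−3/2}. Then for every compact set K ⊂ ℝ², sup_{(τ,θ)∈K} |α_N(τ,θ) + A²·e^{−τ}/π| → 0 as N → ∞. That is, α_N converges uniformly on compact sets to the background value α⁽⁰⁾(τ) = −A²·e^{−τ}/π. -/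
lemma key_est (A C : ℝ) (hC : 0 < C) (y₀ y₁ : ℝ → ℝ)
    (h0 : ∀ s : ℝ, 1 ≤ s →
      |y₀ s - Real.sqrt (2 / (Real.pi * s)) * Real.cos (s - Real.pi / 4)|
        ≤ C * s ^ (-(3:ℝ)/2))
    (h1 : ∀ s : ℝ, 1 ≤ s →
      |y₁ s - Real.sqrt (2 / (Real.pi * s)) * Real.sin (s - Real.pi / 4)|
        ≤ C * s ^ (-(3:ℝ)/2))
    (N : ℕ) (τ θ : ℝ) (hs : 1 ≤ (N : ℝ) * Real.exp (-τ)) :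
    |α_N A y₀ y₁ N τ θ + A ^ 2 * Real.exp (-τ) / Real.pi|
      ≤ A ^ 2 * (2 * (1 + C) ^ 2 + 2 * C * (2 + C)) / (2 * N) := by
  have hE : 0 < Real.exp (-τ) := Real.exp_pos _
  set E := Real.exp (-τ) with hEdef
  set s : ℝ := (N : ℝ) * E with hsdef
  have hs1 : 1 ≤ s := hs
  have hs0 : 0 < s := lt_of_lt_of_le one_pos hs1
  have hN : 0 < (N : ℝ) := by nlinarith
  have hpi : 0 < Real.pi := Real.pi_pos
  set t : ℝ := Real.sqrt s with htdef
  have ht1 : 1 ≤ t := by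
    rw [htdef, show (1:ℝ) = Real.sqrt 1 by simp]
    exact Real.sqrt_le_sqrt hs1
  have ht0 : 0 < t := lt_of_lt_of_le one_pos ht1
  have hts : t * t = s := Real.mul_self_sqrt hs0.le
  set c : ℝ := Real.sqrt (2 / (Real.pi * s)) with hcdef
  have hc2 : c ^ 2 = 2 / (Real.pi * s) := Real.sq_sqrt (by positivity)
  have hcpos : 0 ≤ c := Real.sqrt_nonneg _
  have hct : c ≤ 1 / t := by
    have h1' : 2 / (Real.pi * s) ≤ 1 / s := by
      rw [div_le_div_iff₀ (by positivity) hs0]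
      nlinarith [Real.pi_gt_three]
    calc c ≤ Real.sqrt (1 / s) := Real.sqrt_le_sqrt h1'
      _ = 1 / t := by rw [one_div, Real.sqrt_inv, htdef, one_div]
  have hr : s ^ (-(3:ℝ)/2) = 1 / (s * t) := by
    rw [show (-(3:ℝ)/2) = -(1 + 1/2) by ring, Real.rpow_neg hs0.le,
      Real.rpow_add hs0, Real.rpow_one, ← Real.sqrt_eq_rpow, ← htdef, one_div]
  set u := y₀ s with hudef
  set v := y₁ s with hvdef
  set co := Real.cos (s - Real.pi / 4) with hcodef
  set si := Real.sin (s - Real.pi / 4) with hsidef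
  have he0 : |u - c * co| ≤ C / (s * t) := by
    have h := h0 s hs1; rw [hr, mul_one_div] at h
    rw [hudef, hcdef, hcodef]; exact h
  have he1 : |v - c * si| ≤ C / (s * t) := by
    have h := h1 s hs1; rw [hr, mul_one_div] at h
    rw [hvdef, hcdef, hsidef]; exact h
  have hco : |co| ≤ 1 := by rw [hcodef]; exact Real.abs_cos_le_one _
  have hsi : |si| ≤ 1 := by rw [hsidef]; exact Real.abs_sin_le_one _
  have hpyth : (c * co) ^ 2 + (c * si) ^ 2 = c ^ 2 := by
    rw [hcodef, hsidef]
    have h := Real.sin_sq_add_cos_sq (s - Real.pi / 4)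
    linear_combination c ^ 2 * h
  clear_value u v co si c t s E
  have hCst : C / (s * t) ≤ C / t := by
    rw [div_le_div_iff₀ (by positivity) ht0]
    nlinarith [mul_nonneg (mul_nonneg hC.le ht0.le) (sub_nonneg.mpr hs1),
      mul_pos hC ht0]
  have hcco : |c * co| ≤ 1 / t := by
    rw [abs_mul, abs_of_nonneg hcpos]
    calc c * |co| ≤ c * 1 := mul_le_mul_of_nonneg_left hco hcpos
      _ = c := by ring
      _ ≤ 1 / t := hct
  have hcsi : |c * si| ≤ 1 / t := by
    rw [abs_mul, abs_of_nonneg hcpos]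
    calc c * |si| ≤ c * 1 := mul_le_mul_of_nonneg_left hsi hcpos
      _ = c := by ring
      _ ≤ 1 / t := hct
  have hu : |u| ≤ (1 + C) / t := by
    have hrw : u = (u - c * co) + c * co := by ring
    calc |u| = |(u - c * co) + c * co| := by rw [← hrw]
      _ ≤ |u - c * co| + |c * co| := abs_add_le _ _
      _ ≤ C / t + 1 / t := add_le_add (le_trans he0 hCst) hcco
      _ = (1 + C) / t := by ring
  have hv : |v| ≤ (1 + C) / t := by
    have hrw : v = (v - c * si) + c * si := by ring
    calc |v| = |(v - c * si) + c * si| := by rw [← hrw]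
      _ ≤ |v - c * si| + |c * si| := abs_add_le _ _
      _ ≤ C / t + 1 / t := add_le_add (le_trans he1 hCst) hcsi
      _ = (1 + C) / t := by ring
  -- bound on |u^2 + v^2 - c^2|
  have hsq : |u ^ 2 + v ^ 2 - c ^ 2| ≤ 2 * C * (2 + C) / s ^ 2 := by
    have hu2 : |u ^ 2 - (c * co) ^ 2| ≤ C * (2 + C) / s ^ 2 := by
      have hfac : u ^ 2 - (c * co) ^ 2 = (u - c * co) * (u + c * co) := by ring
      have hsum : |u + c * co| ≤ (2 + C) / t := by
        calc |u + c * co| ≤ |u| + |c * co| := abs_add_le _ _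
          _ ≤ (1 + C) / t + 1 / t := add_le_add hu hcco
          _ = (2 + C) / t := by ring
      rw [hfac, abs_mul]
      calc |u - c * co| * |u + c * co| ≤ (C / (s * t)) * ((2 + C) / t) := by
            apply mul_le_mul he0 hsum (abs_nonneg _) (by positivity)
        _ = C * (2 + C) / (s * (t * t)) := by ring
        _ = C * (2 + C) / s ^ 2 := by rw [hts]; ring
    have hv2 : |v ^ 2 - (c * si) ^ 2| ≤ C * (2 + C) / s ^ 2 := by
      have hfac : v ^ 2 - (c * si) ^ 2 = (v - c * si) * (v + c * si) := by ring
      have hsum : |v + c * si| ≤ (2 + C) / t := by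
        calc |v + c * si| ≤ |v| + |c * si| := abs_add_le _ _
          _ ≤ (1 + C) / t + 1 / t := add_le_add hv hcsi
          _ = (2 + C) / t := by ring
      rw [hfac, abs_mul]
      calc |v - c * si| * |v + c * si| ≤ (C / (s * t)) * ((2 + C) / t) := by
            apply mul_le_mul he1 hsum (abs_nonneg _) (by positivity)
        _ = C * (2 + C) / (s * (t * t)) := by ring
        _ = C * (2 + C) / s ^ 2 := by rw [hts]; ring
    have hrw : u ^ 2 + v ^ 2 - c ^ 2
        = (u ^ 2 - (c * co) ^ 2) + (v ^ 2 - (c * si) ^ 2) := by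
      linear_combination hpyth
    calc |u ^ 2 + v ^ 2 - c ^ 2|
        = |(u ^ 2 - (c * co) ^ 2) + (v ^ 2 - (c * si) ^ 2)| := by rw [hrw]
      _ ≤ |u ^ 2 - (c * co) ^ 2| + |v ^ 2 - (c * si) ^ 2| := abs_add_le _ _
      _ ≤ C * (2 + C) / s ^ 2 + C * (2 + C) / s ^ 2 := add_le_add hu2 hv2
      _ = 2 * C * (2 + C) / s ^ 2 := by ring
  -- bound on the bracket
  set B : ℝ := u * v * (Real.cos (2 * (N : ℝ) * θ) - 1) + s * (u ^ 2 + v ^ 2) - 2 / Real.pi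
    with hBdef
  have hB : |B| ≤ (2 * (1 + C) ^ 2 + 2 * C * (2 + C)) / s := by
    have h1' : |u * v * (Real.cos (2 * (N : ℝ) * θ) - 1)| ≤ 2 * (1 + C) ^ 2 / s := by
      rw [abs_mul, abs_mul]
      have hcos : |Real.cos (2 * (N : ℝ) * θ) - 1| ≤ 2 := by
        have h := Real.abs_cos_le_one (2 * (N : ℝ) * θ)
        rw [abs_le] at h ⊢
        constructor <;> linarith [h.1, h.2]
      calc |u| * |v| * |Real.cos (2 * (N : ℝ) * θ) - 1|
          ≤ ((1 + C) / t) * ((1 + C) / t) * 2 := by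
            apply mul_le_mul _ hcos (abs_nonneg _) (by positivity)
            exact mul_le_mul hu hv (abs_nonneg _) (by positivity)
        _ = 2 * (1 + C) ^ 2 / (t * t) := by ring
        _ = 2 * (1 + C) ^ 2 / s := by rw [hts]
    have h2' : |s * (u ^ 2 + v ^ 2) - 2 / Real.pi| ≤ 2 * C * (2 + C) / s := by
      have hsc : s * c ^ 2 = 2 / Real.pi := by
        rw [hc2]; field_simp
      calc |s * (u ^ 2 + v ^ 2) - 2 / Real.pi|
          = |s| * |u ^ 2 + v ^ 2 - c ^ 2| := by
            rw [← abs_mul]; congr 1; rw [← hsc]; ring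
        _ = s * |u ^ 2 + v ^ 2 - c ^ 2| := by rw [abs_of_pos hs0]
        _ ≤ s * (2 * C * (2 + C) / s ^ 2) := mul_le_mul_of_nonneg_left hsq hs0.le
        _ = 2 * C * (2 + C) / s := by field_simp
    calc |B| ≤ |u * v * (Real.cos (2 * (N : ℝ) * θ) - 1)|
          + |s * (u ^ 2 + v ^ 2) - 2 / Real.pi| := by
          rw [hBdef, add_sub_assoc]; exact abs_add_le _ _
      _ ≤ 2 * (1 + C) ^ 2 / s + 2 * C * (2 + C) / s := add_le_add h1' h2'
      _ = (2 * (1 + C) ^ 2 + 2 * C * (2 + C)) / s := by ring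
  -- the algebraic identity
  have hE2 : Real.exp (-2 * τ) = E * E := by
    rw [hEdef, ← Real.exp_add]; ring_nf
  have hident : α_N A y₀ y₁ N τ θ + A ^ 2 * E / Real.pi = -(A ^ 2 * E / 2) * B := by
    rw [hBdef, hudef, hvdef, hsdef]
    simp only [α_N, y₂fun, ← hEdef, hE2]
    field_simp
    ring
  rw [hident, abs_mul, abs_neg, abs_of_nonneg (by positivity : (0:ℝ) ≤ A ^ 2 * E / 2)]
  calc A ^ 2 * E / 2 * |B| ≤ A ^ 2 * E / 2 * ((2 * (1 + C) ^ 2 + 2 * C * (2 + C)) / s) :=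
        mul_le_mul_of_nonneg_left hB (by positivity)
    _ = A ^ 2 * (2 * (1 + C) ^ 2 + 2 * C * (2 + C)) / (2 * N) := by
        rw [hsdef]; field_simp

open Filter

/-- Under the standard large-argument Bessel asymptotics
`|y₀(s) − √(2/(πs))·cos(s − π/4)| ≤ C·s^{−3/2}` and
`|y₁(s) − √(2/(πs))·sin(s − π/4)| ≤ C·s^{−3/2}` for `s ≥ 1`, the functions `α_N`
converge uniformly on every compact `K ⊂ ℝ²` to the background value
`α⁽⁰⁾(τ) = −A²·e^{−τ}/π`. -/
theorem α_N_uniform_limit (A C : ℝ) (hA : 0 < A) (hC : 0 < C) (y₀ y₁ : ℝ → ℝ)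
    (h0 : ∀ s : ℝ, 1 ≤ s →
      |y₀ s - Real.sqrt (2 / (Real.pi * s)) * Real.cos (s - Real.pi / 4)|
        ≤ C * s ^ (-(3:ℝ)/2))
    (h1 : ∀ s : ℝ, 1 ≤ s →
      |y₁ s - Real.sqrt (2 / (Real.pi * s)) * Real.sin (s - Real.pi / 4)|
        ≤ C * s ^ (-(3:ℝ)/2))
    (K : Set (ℝ × ℝ)) (hK : IsCompact K) :
    Tendsto (fun N : ℕ =>
        sSup ((fun p : ℝ × ℝ =>
          |α_N A y₀ y₁ N p.1 p.2 + A ^ 2 * Real.exp (-p.1) / Real.pi|) '' K))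
      atTop (nhds 0) := by
  obtain ⟨r, hr⟩ := hK.isBounded.subset_closedBall 0
  set R : ℝ := max r 0 with hRdef
  have hτ : ∀ p ∈ K, p.1 ≤ R := by
    intro p hp
    have h := hr hp
    rw [Metric.mem_closedBall, dist_zero_right] at h
    have h2 : ‖p.1‖ ≤ ‖p‖ := norm_fst_le p
    calc p.1 ≤ |p.1| := le_abs_self _
      _ ≤ r := by rw [← Real.norm_eq_abs]; exact le_trans h2 h
      _ ≤ R := le_max_left _ _
  set D : ℝ := 2 * (1 + C) ^ 2 + 2 * C * (2 + C) with hDdef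
  have hD : 0 < D := by positivity
  apply squeeze_zero'
    (g := fun N : ℕ => A ^ 2 * D / (2 * N))
  · filter_upwards with N
    apply Real.sSup_nonneg
    rintro x ⟨p, hp, rfl⟩
    exact abs_nonneg _
  · filter_upwards [eventually_ge_atTop ⌈Real.exp R⌉₊] with N hN
    have hN' : Real.exp R ≤ (N : ℝ) := by
      have := Nat.ceil_le.mp hN
      exact_mod_cast this
    apply Real.sSup_le
    · rintro x ⟨p, hp, rfl⟩
      apply key_est A C hC y₀ y₁ h0 h1 N p.1 p.2
      have hexp : Real.exp p.1 ≤ (N : ℝ) := le_trans (Real.exp_le_exp.mpr (hτ p hp)) hN'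
      have hmul : Real.exp p.1 * Real.exp (-p.1) ≤ (N : ℝ) * Real.exp (-p.1) :=
        mul_le_mul_of_nonneg_right hexp (Real.exp_pos _).le
      rwa [← Real.exp_add, add_neg_cancel, Real.exp_zero] at hmul
    · positivity
  · have h := tendsto_const_div_atTop_nhds_zero_nat (A ^ 2 * D / 2)
    apply h.congr
    intro N
    rw [div_div]
end

section
/- Let A > 0 and for λ > 0 define φ_λ : ℝ³ → ℝ by φ_λ(x₁,x₂,x₃) = λ·A·(sin(x₁/λ) + sin(x₂/λ) + sin(x₃/λ)). Define Δφ_λ = Σ_i ∂²φ_λ/∂x_i² and |∇φ_λ|² = Σ_i (∂φ_λ/∂x_i)². Then for every continuously differentiable compactly supported f : ℝ³ → ℝ and all i, j ∈ {1,2,3}: (a) lim_{λ→0⁺} ∫_{ℝ³} f·(2·Δφ_λ + |∇φ_λ|²) dx = (3A²/2)·∫_{ℝ³} f dx, and (b) lim_{λ→0⁺} ∫_{ℝ³} f·(2·∂²φ_λ/∂x_i∂x_j − 2·δ_{ij}·Δφ_λ − 2·(∂φ_λ/∂x_i)(∂φ_λ/∂x_j) − δ_{ij}·|∇φ_λ|²)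 dx = −(5A²/2)·δ_{ij}·∫_{ℝ³} f dx. Hence the effective stress-energy tensor t⁽⁰⁾ = (1/8π)·wlim of these expressions has components t⁽⁰⁾₀₀ = 3A²/(16π) and t⁽⁰⁾_{ij} = −(5A²/(16π))·δ_{ij}, corresponding to a fluid with P = −(5/3)·ρ, which is neither traceless nor satisfies the weak energy condition. -/
/-- The conformal exponent `φ_λ(x) = λ·A·(sin(x₁/λ) + sin(x₂/λ) + sin(x₃/λ)) = log Ω(λ)`. -/
noncomputable def phiConf (A lam : ℝ) (x : Fin 3 → ℝ) : ℝ :=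
  lam * A * (Real.sin (x 0 / lam) + Real.sin (x 1 / lam) + Real.sin (x 2 / lam))

/-- The partial derivative `∂φ_λ/∂x_i` at `x`. -/
noncomputable def dphiConf (A lam : ℝ) (i : Fin 3) (x : Fin 3 → ℝ) : ℝ :=
  deriv (fun t : ℝ => phiConf A lam (Function.update x i t)) (x i)

/-- The second partial derivative `∂²φ_λ/∂x_i∂x_j` at `x`. -/
noncomputable def d2phiConf (A lam : ℝ) (i j : Fin 3) (x : Fin 3 → ℝ) : ℝ :=
  deriv (fun t : ℝ => dphiConf A lam j (Function.update x i t)) (x i)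

/-- The Laplacian `Δφ_λ = Σ_i ∂²φ_λ/∂x_i²`. -/
noncomputable def lapPhiConf (A lam : ℝ) (x : Fin 3 → ℝ) : ℝ :=
  ∑ i : Fin 3, d2phiConf A lam i i x

/-- The squared gradient `|∇φ_λ|² = Σ_i (∂φ_λ/∂x_i)²`. -/
noncomputable def gradSqPhiConf (A lam : ℝ) (x : Fin 3 → ℝ) : ℝ :=
  ∑ i : Fin 3, (dphiConf A lam i x) ^ 2

open Filter MeasureTheory

section Aux

open Real Complex
open scoped RealInnerProductSpace FourierTransform Topology

/-! ### Explicit derivative computations -/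

lemma hasDerivAt_sin_div (lam t : ℝ) :
    HasDerivAt (fun s : ℝ => Real.sin (s / lam)) (Real.cos (t / lam) * (1 / lam)) t := by
  simpa [Function.comp_def] using (Real.hasDerivAt_sin (t / lam)).comp t ((hasDerivAt_id t).div_const lam)

lemma hasDerivAt_cos_div (lam t : ℝ) :
    HasDerivAt (fun s : ℝ => Real.cos (s / lam)) (-Real.sin (t / lam) * (1 / lam)) t := by
  simpa [Function.comp_def] using (Real.hasDerivAt_cos (t / lam)).comp t ((hasDerivAt_id t).div_const lam)

lemma dphiConf_eq (A : ℝ) {lam : ℝ} (hl : lam ≠ 0) (i : Fin 3) (x : Fin 3 → ℝ) :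
    dphiConf A lam i x = A * Real.cos (x i / lam) := by
  have key : HasDerivAt (fun t : ℝ => phiConf A lam (Function.update x i t))
      (A * Real.cos (x i / lam)) (x i) := by
    fin_cases i
    · show HasDerivAt (fun t : ℝ => phiConf A lam (Function.update x 0 t))
        (A * Real.cos (x 0 / lam)) (x 0)
      have h := (((hasDerivAt_sin_div lam (x 0)).add_const
        (Real.sin (x 1 / lam))).add_const (Real.sin (x 2 / lam))).const_mul (lam * A)
      refine (h.congr_deriv ?_).congr_of_eventuallyEq (Filter.Eventually.of_forall fun t => ?_)
      · field_simp
      · simp [phiConf]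
    · show HasDerivAt (fun t : ℝ => phiConf A lam (Function.update x 1 t))
        (A * Real.cos (x 1 / lam)) (x 1)
      have h := ((((hasDerivAt_sin_div lam (x 1)).const_add
        (Real.sin (x 0 / lam))).add_const (Real.sin (x 2 / lam))).const_mul (lam * A))
      refine (h.congr_deriv ?_).congr_of_eventuallyEq (Filter.Eventually.of_forall fun t => ?_)
      · field_simp
      · simp [phiConf]
    · show HasDerivAt (fun t : ℝ => phiConf A lam (Function.update x 2 t))
        (A * Real.cos (x 2 / lam)) (x 2)
      have h := (((hasDerivAt_sin_div lam (x 2)).const_add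
        (Real.sin (x 0 / lam) + Real.sin (x 1 / lam))).const_mul (lam * A))
      refine (h.congr_deriv ?_).congr_of_eventuallyEq (Filter.Eventually.of_forall fun t => ?_)
      · field_simp
      · simp [phiConf]
  rw [dphiConf]; exact key.deriv

lemma d2phiConf_eq (A : ℝ) {lam : ℝ} (hl : lam ≠ 0) (i j : Fin 3) (x : Fin 3 → ℝ) :
    d2phiConf A lam i j x = if i = j then -(A / lam) * Real.sin (x i / lam) else 0 := by
  rw [d2phiConf]
  have hfun : (fun t : ℝ => dphiConf A lam j (Function.update x i t))
      = fun t : ℝ => A * Real.cos (Function.update x i t j / lam) :=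
    funext fun t => dphiConf_eq A hl j _
  rw [hfun]
  by_cases h : i = j
  · subst h
    rw [if_pos rfl]
    simp only [Function.update_self]
    have hc : HasDerivAt (fun t : ℝ => A * Real.cos (t / lam))
        (-(A / lam) * Real.sin (x i / lam)) (x i) := by
      exact ((hasDerivAt_cos_div lam (x i)).const_mul A).congr_deriv (by ring)
    exact hc.deriv
  · rw [if_neg h]
    have : (fun t : ℝ => A * Real.cos (Function.update x i t j / lam))
        = fun _ : ℝ => A * Real.cos (x j / lam) := by
      funext t
      rw [Function.update_of_ne (Ne.symm h)]
    rw [this]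
    exact deriv_const _ _

lemma lapPhiConf_eq (A : ℝ) {lam : ℝ} (hl : lam ≠ 0) (x : Fin 3 → ℝ) :
    lapPhiConf A lam x = ∑ k : Fin 3, -(A / lam) * Real.sin (x k / lam) := by
  simp [lapPhiConf, d2phiConf_eq A hl]

lemma gradSqPhiConf_eq (A : ℝ) {lam : ℝ} (hl : lam ≠ 0) (x : Fin 3 → ℝ) :
    gradSqPhiConf A lam x = ∑ k : Fin 3, (A * Real.cos (x k / lam)) ^ 2 := by
  simp [gradSqPhiConf, dphiConf_eq A hl]

/-! ### Riemann–Lebesgue type lemmas -/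

noncomputable abbrev Euc := EuclideanSpace ℝ (Fin 3)

lemma rl_euclidean (g : Euc → ℝ) (hg : Continuous g) (hgs : HasCompactSupport g)
    (v : Euc) (hv : v ≠ 0) :
    Tendsto (fun lam : ℝ => ∫ x : Euc, g x * Real.cos (⟪x, v⟫ / lam))
      (nhdsWithin 0 (Set.Ioi 0)) (nhds 0) := by
  have hgi : Integrable (fun x : Euc => (g x : ℂ)) :=
    (hg.integrable_of_hasCompactSupport hgs).ofReal
  have hRL : Tendsto (fun w : Euc => ∫ x : Euc, 𝐞 (-⟪x, w⟫) • (g x : ℂ))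
      (Filter.cocompact Euc) (nhds 0) :=
    tendsto_integral_exp_inner_smul_cocompact (f := fun x : Euc => (g x : ℂ))
  set w : ℝ → Euc := fun lam => (2 * π * lam)⁻¹ • v with hw
  have hwt : Tendsto w (nhdsWithin 0 (Set.Ioi 0)) (Filter.cocompact Euc) := by
    rw [← Metric.cobounded_eq_cocompact, ← comap_norm_atTop, tendsto_comap_iff]
    have h1 : Tendsto (fun lam : ℝ => 2 * π * lam) (nhdsWithin 0 (Set.Ioi 0))
        (nhdsWithin 0 (Set.Ioi 0)) := by
      apply tendsto_nhdsWithin_of_tendsto_nhds_of_eventually_within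
      · have : Tendsto (fun lam : ℝ => 2 * π * lam) (nhds 0) (nhds 0) := by
          simpa using (continuous_mul_left (2 * π)).tendsto (0 : ℝ)
        exact this.mono_left nhdsWithin_le_nhds
      · filter_upwards [self_mem_nhdsWithin] with lam (hl : 0 < lam)
        exact Set.mem_Ioi.mpr (by positivity)
    have h2 : Tendsto (fun lam : ℝ => ((2 * π * lam)⁻¹ * ‖v‖)) (nhdsWithin 0 (Set.Ioi 0))
        atTop := by
      apply Tendsto.atTop_mul_const (norm_pos_iff.mpr hv)
      exact tendsto_inv_nhdsGT_zero.comp h1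
    apply h2.congr'
    filter_upwards [self_mem_nhdsWithin] with lam (hl : 0 < lam)
    simp [w, norm_smul, abs_of_pos, Real.pi_pos, hl,
      abs_of_pos (by positivity : (0:ℝ) < 2 * π * lam)]
  have key : Tendsto (fun lam : ℝ => ∫ x : Euc, 𝐞 (-⟪x, w lam⟫) • (g x : ℂ))
      (nhdsWithin 0 (Set.Ioi 0)) (nhds 0) := hRL.comp hwt
  have keyRe := (Complex.continuous_re.tendsto 0).comp key
  simp only [Complex.zero_re] at keyRe
  apply keyRe.congr'
  filter_upwards [self_mem_nhdsWithin] with lam (hl : 0 < lam)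
  have hint : Integrable (fun x : Euc => 𝐞 (-⟪x, w lam⟫) • (g x : ℂ)) :=
    (Real.fourierIntegral_convergent_iff (w lam)).2 hgi
  have : (∫ x : Euc, 𝐞 (-⟪x, w lam⟫) • (g x : ℂ)).re
      = ∫ x : Euc, ((𝐞 (-⟪x, w lam⟫) • (g x : ℂ)).re) := by
    exact (Complex.reCLM.integral_comp_comm hint).symm
  rw [Function.comp_apply, this]
  congr 1
  funext x
  have harg : 2 * π * -⟪x, w lam⟫ = -(⟪x, v⟫ / lam) := by
    rw [hw]
    simp only [inner_smul_right]
    have : (2 * π * lam) ≠ 0 := by positivity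
    field_simp
  rw [Circle.smul_def, Real.fourierChar_apply, harg, smul_eq_mul,
    mul_comm _ ((g x : ℝ) : ℂ), Complex.re_ofReal_mul, Complex.exp_ofReal_mul_I_re,
    Real.cos_neg]

lemma rl_pi (g : (Fin 3 → ℝ) → ℝ) (hg : Continuous g) (hgs : HasCompactSupport g)
    (v : Fin 3 → ℝ) (hv : v ≠ 0) :
    Tendsto (fun lam : ℝ => ∫ x : Fin 3 → ℝ, g x * Real.cos ((∑ m, v m * x m) / lam))
      (nhdsWithin 0 (Set.Ioi 0)) (nhds 0) := by
  classical
  set e := (MeasurableEquiv.toLp 2 (Fin 3 → ℝ)).symm with he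
  set L := (EuclideanSpace.equiv (Fin 3) ℝ : EuclideanSpace ℝ (Fin 3) ≃L[ℝ] (Fin 3 → ℝ))
  have hcoe : ∀ y : EuclideanSpace ℝ (Fin 3), e y = L y := fun _ => rfl
  set g' : EuclideanSpace ℝ (Fin 3) → ℝ := fun y => g (e y) with hg'
  have hg'c : Continuous g' := hg.comp
    (by rw [show (⇑e : _ → _) = ⇑L from funext hcoe]; exact L.continuous)
  have hg's : HasCompactSupport g' := by
    have : g' = g ∘ L.toHomeomorph := funext fun y => congrArg g (hcoe y)
    rw [this]
    exact hgs.comp_homeomorph L.toHomeomorph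
  set v' : EuclideanSpace ℝ (Fin 3) := (WithLp.equiv 2 (Fin 3 → ℝ)).symm v with hv'
  have hv'0 : v' ≠ 0 := by
    intro h
    apply hv
    funext m
    exact congrArg (fun w : EuclideanSpace ℝ (Fin 3) => w m) h
  have hinner : ∀ y : EuclideanSpace ℝ (Fin 3), (∑ m, v m * (e y) m) = ⟪y, v'⟫ := by
    intro y
    rw [PiLp.inner_apply]
    exact Finset.sum_congr rfl fun m _ => by simp [hv', he, mul_comm]
  have key := rl_euclidean g' hg'c hg's v' hv'0
  apply key.congr
  intro lam
  have := (EuclideanSpace.volume_preserving_symm_measurableEquiv_toLp (Fin 3)).integral_comp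
    e.measurableEmbedding (fun x : Fin 3 → ℝ => g x * Real.cos ((∑ m, v m * x m) / lam))
  rw [← this]
  apply integral_congr_ae
  filter_upwards with y
  rw [hinner y]

lemma lipschitzWith_cos_aux : LipschitzWith 1 Real.cos := by
  apply LipschitzWith.of_dist_le_mul
  intro a b
  rw [Real.dist_eq, Real.dist_eq, Real.cos_sub_cos]
  have h1 : |Real.sin ((a + b) / 2)| ≤ 1 := Real.abs_sin_le_one _
  have h2 : |Real.sin ((a - b) / 2)| ≤ |a - b| / 2 := by
    calc |Real.sin ((a - b) / 2)| ≤ |(a - b) / 2| := Real.abs_sin_le_abs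
    _ = |a - b| / 2 := by rw [abs_div]; norm_num
  have e : |(-2) * Real.sin ((a + b) / 2) * Real.sin ((a - b) / 2)|
      = 2 * |Real.sin ((a + b) / 2)| * |Real.sin ((a - b) / 2)| := by
    rw [abs_mul, abs_mul]
    norm_num
  rw [e]
  have h3 : (0:ℝ) ≤ |Real.sin ((a - b) / 2)| := abs_nonneg _
  have h4 : (0:ℝ) ≤ |Real.sin ((a + b) / 2)| := abs_nonneg _
  have : (2:ℝ) * |Real.sin ((a + b) / 2)| * |Real.sin ((a - b) / 2)| ≤ 2 * 1 * (|a - b| / 2) := by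
    nlinarith
  simpa using this.trans (by ring_nf; exact le_refl _)

lemma sum_single_mul (k : Fin 3) (x : Fin 3 → ℝ) :
    ∑ m, (Pi.single k 1 : Fin 3 → ℝ) m * x m = x k := by
  simp [Pi.single_apply]

lemma integ_mul {f h : (Fin 3 → ℝ) → ℝ} (hfc : Continuous f) (hs : HasCompactSupport f)
    (hh : Continuous h) : Integrable (fun x : Fin 3 → ℝ => f x * h x) :=
  (hfc.mul hh).integrable_of_hasCompactSupport (hs.mul_right)

lemma ibp_tendsto (f : (Fin 3 → ℝ) → ℝ) (hf : ContDiff ℝ 1 f) (hs : HasCompactSupport f)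
    (k : Fin 3) :
    Tendsto (fun lam : ℝ => ∫ x : Fin 3 → ℝ, f x * (Real.sin (x k / lam) / lam))
      (nhdsWithin 0 (Set.Ioi 0)) (nhds 0) := by
  classical
  obtain ⟨C, hC⟩ := ContDiff.lipschitzWith_of_hasCompactSupport hs hf one_ne_zero
  set df : (Fin 3 → ℝ) → ℝ := fun x => fderiv ℝ f x ((Pi.single k 1 : Fin 3 → ℝ)) with hdf
  have hdfc : Continuous df :=
    (hf.continuous_fderiv one_ne_zero).clm_apply continuous_const
  have hdfs : HasCompactSupport df :=
    (hs.fderiv ℝ).comp_left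
      (g := fun L : (Fin 3 → ℝ) →L[ℝ] ℝ => L ((Pi.single k 1 : Fin 3 → ℝ))) rfl
  have hrl := rl_pi df hdfc hdfs ((Pi.single k 1 : Fin 3 → ℝ)) (by
    intro h
    have := congrFun h k
    simp at this)
  have hrl' : Tendsto (fun lam : ℝ => ∫ x : Fin 3 → ℝ, df x * Real.cos (x k / lam))
      (nhdsWithin 0 (Set.Ioi 0)) (nhds 0) := by
    apply hrl.congr
    intro lam
    apply integral_congr_ae
    filter_upwards with x
    rw [sum_single_mul]
  apply hrl'.congr'
  filter_upwards [self_mem_nhdsWithin] with lam (hl : 0 < lam)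
  set c : (Fin 3 → ℝ) → ℝ := fun x => Real.cos (x k / lam) with hc
  set Lc : (Fin 3 → ℝ) →L[ℝ] ℝ := (1 / lam) • ContinuousLinearMap.proj k with hLc
  have hcL : LipschitzWith (1 * ‖Lc‖₊) c := by
    have : c = Real.cos ∘ Lc := by
      funext x
      simp [hc, hLc, ContinuousLinearMap.proj_apply, one_div, div_eq_inv_mul]
    rw [this]
    exact lipschitzWith_cos_aux.comp Lc.lipschitz
  have hibp := LipschitzWith.integral_lineDeriv_mul_eq (μ := volume) hcL hC hs
    ((Pi.single k 1 : Fin 3 → ℝ))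
  have hld1 : ∀ x : Fin 3 → ℝ, lineDeriv ℝ c x ((Pi.single k 1 : Fin 3 → ℝ))
      = -Real.sin (x k / lam) * (1 / lam) := by
    intro x
    have h1 : HasLineDerivAt ℝ c (-Real.sin (x k / lam) * (1 / lam)) x
        ((Pi.single k 1 : Fin 3 → ℝ)) := by
      show HasDerivAt (fun t : ℝ => c (x + t • (Pi.single k 1 : Fin 3 → ℝ))) _ 0
      have heq : (fun t : ℝ => c (x + t • (Pi.single k 1 : Fin 3 → ℝ)))
          = fun t : ℝ => Real.cos ((x k + t) / lam) := by
        funext t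
        simp [hc, Pi.single_apply]
      rw [heq]
      have hin : HasDerivAt (fun t : ℝ => x k + t) 1 0 := (hasDerivAt_id 0).const_add (x k)
      simpa [Function.comp_def] using (hasDerivAt_cos_div lam (x k + 0)).comp 0 hin
    exact h1.lineDeriv
  have hld2 : ∀ x : Fin 3 → ℝ,
      lineDeriv ℝ f x (-(Pi.single k 1 : Fin 3 → ℝ)) = -(df x) := by
    intro x
    rw [(hf.differentiable one_ne_zero x).lineDeriv_eq_fderiv]
    simp [hdf]
  rw [show ∫ x : Fin 3 → ℝ, lineDeriv ℝ c x ((Pi.single k 1 : Fin 3 → ℝ)) * f x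
      = ∫ x : Fin 3 → ℝ, -(f x * (Real.sin (x k / lam) / lam)) from
      integral_congr_ae (Filter.Eventually.of_forall fun x => by
        simp only [hld1 x]; ring),
    show ∫ x : Fin 3 → ℝ, lineDeriv ℝ f x (-(Pi.single k 1 : Fin 3 → ℝ)) * c x
      = ∫ x : Fin 3 → ℝ, -(df x * Real.cos (x k / lam)) from
      integral_congr_ae (Filter.Eventually.of_forall fun x => by
        simp only [hld2 x]; ring),
    integral_neg, integral_neg, neg_inj] at hibp
  exact hibp.symm

lemma cos_sq_tendsto (f : (Fin 3 → ℝ) → ℝ) (hfc : Continuous f) (hs : HasCompactSupport f)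
    (k : Fin 3) :
    Tendsto (fun lam : ℝ => ∫ x : Fin 3 → ℝ, f x * Real.cos (x k / lam) ^ 2)
      (nhdsWithin 0 (Set.Ioi 0)) (nhds ((1 / 2) * ∫ x : Fin 3 → ℝ, f x)) := by
  classical
  have hv : (Pi.single k 2 : Fin 3 → ℝ) ≠ 0 := by
    intro h
    have := congrFun h k
    simp at this
  have hrl := rl_pi (fun x => f x * (1 / 2)) (hfc.mul continuous_const) (hs.mul_right)
    ((Pi.single k 2 : Fin 3 → ℝ)) hv
  have hbase : Tendsto (fun lam : ℝ => (∫ x : Fin 3 → ℝ, f x * (1 / 2)) +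
      ∫ x : Fin 3 → ℝ, (f x * (1 / 2)) *
        Real.cos ((∑ m, (Pi.single k 2 : Fin 3 → ℝ) m * x m) / lam))
      (nhdsWithin 0 (Set.Ioi 0)) (nhds ((1 / 2) * ∫ x : Fin 3 → ℝ, f x)) := by
    have := tendsto_const_nhds (x := ∫ x : Fin 3 → ℝ, f x * (1 / 2))
      (f := nhdsWithin (0:ℝ) (Set.Ioi 0)) |>.add hrl
    simpa [integral_mul_const, mul_comm] using this
  apply hbase.congr
  intro lam
  have hsum : ∀ x : Fin 3 → ℝ, (∑ m, (Pi.single k 2 : Fin 3 → ℝ) m * x m) = 2 * x k := by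
    intro x
    simp [Pi.single_apply]
  have hpt : ∀ x : Fin 3 → ℝ, f x * (1 / 2) +
      (f x * (1 / 2)) * Real.cos ((∑ m, (Pi.single k 2 : Fin 3 → ℝ) m * x m) / lam)
      = f x * Real.cos (x k / lam) ^ 2 := by
    intro x
    rw [hsum x, mul_div_assoc, Real.cos_sq (x k / lam)]
    ring
  have hint1 : Integrable (fun x : Fin 3 → ℝ => f x * (1 / 2)) :=
    integ_mul hfc hs continuous_const
  have hint2 : Integrable (fun x : Fin 3 → ℝ => (f x * (1 / 2)) *
      Real.cos ((∑ m, (Pi.single k 2 : Fin 3 → ℝ) m * x m) / lam)) :=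
    integ_mul (hfc.mul continuous_const) (hs.mul_right)
      (Real.continuous_cos.comp ((by fun_prop : Continuous
        (fun x : Fin 3 → ℝ => ∑ m, (Pi.single k 2 : Fin 3 → ℝ) m * x m)).div_const lam))
  rw [← integral_add hint1 hint2]
  exact integral_congr_ae (Filter.Eventually.of_forall fun x => hpt x)

lemma combined_tendsto (f : (Fin 3 → ℝ) → ℝ) (hf : ContDiff ℝ 1 f) (hs : HasCompactSupport f)
    (c1 c2 : Fin 3 → ℝ) :
    Filter.Tendsto (fun lam : ℝ => ∑ k : Fin 3,
        (c1 k * (∫ x : Fin 3 → ℝ, f x * (Real.sin (x k / lam) / lam))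
          + c2 k * (∫ x : Fin 3 → ℝ, f x * Real.cos (x k / lam) ^ 2)))
      (nhdsWithin 0 (Set.Ioi 0))
      (nhds (∑ k : Fin 3, c2 k * ((1 / 2) * ∫ x : Fin 3 → ℝ, f x))) := by
  have h := tendsto_finset_sum (Finset.univ : Finset (Fin 3)) (fun k _ =>
    ((ibp_tendsto f hf hs k).const_mul (c1 k)).add
      ((cos_sq_tendsto f hf.continuous hs k).const_mul (c2 k)))
  simpa using h

lemma split_integral (f : (Fin 3 → ℝ) → ℝ) (hfc : Continuous f) (hs : HasCompactSupport f)
    (c1 c2 : Fin 3 → ℝ) (lam : ℝ) :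
    (∫ x : Fin 3 → ℝ, (∑ k : Fin 3, (c1 k * (f x * (Real.sin (x k / lam) / lam))
        + c2 k * (f x * Real.cos (x k / lam) ^ 2))))
    = ∑ k : Fin 3, (c1 k * (∫ x : Fin 3 → ℝ, f x * (Real.sin (x k / lam) / lam))
        + c2 k * (∫ x : Fin 3 → ℝ, f x * Real.cos (x k / lam) ^ 2)) := by
  have hInt1 : ∀ k : Fin 3,
      Integrable (fun x : Fin 3 → ℝ => f x * (Real.sin (x k / lam) / lam)) := fun k =>
    integ_mul hfc hs
      ((Real.continuous_sin.comp ((continuous_apply k : Continuous fun x : Fin 3 → ℝ => x k).div_const lam)).div_const lam)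
  have hInt2 : ∀ k : Fin 3,
      Integrable (fun x : Fin 3 → ℝ => f x * Real.cos (x k / lam) ^ 2) := fun k =>
    integ_mul hfc hs
      ((Real.continuous_cos.comp ((continuous_apply k : Continuous fun x : Fin 3 → ℝ => x k).div_const lam)).pow 2)
  refine Eq.trans (integral_finset_sum (μ := volume) Finset.univ
      (f := fun (k : Fin 3) (x : Fin 3 → ℝ) => c1 k * (f x * (Real.sin (x k / lam) / lam))
        + c2 k * (f x * Real.cos (x k / lam) ^ 2))
      (fun k _ => ((hInt1 k).const_mul _).add ((hInt2 k).const_mul _))) ?_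
  refine Finset.sum_congr rfl fun k _ => ?_
  rw [integral_add ((hInt1 k).const_mul _) ((hInt2 k).const_mul _),
    integral_const_mul, integral_const_mul]

end Aux

/-- For `φ_λ(x) = λ·A·(sin(x₁/λ)+sin(x₂/λ)+sin(x₃/λ))`, every
continuously differentiable compactly supported `f : ℝ³ → ℝ` and all `i, j`:
(a) `∫ f·(2Δφ_λ + |∇φ_λ|²) → (3A²/2)·∫ f` and
(b) `∫ f·(2∂_i∂_jφ_λ − 2δ_{ij}Δφ_λ − 2(∂_iφ_λ)(∂_jφ_λ) − δ_{ij}|∇φ_λ|²) → −(5A²/2)·δ_{ij}·∫ f`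
as `λ → 0⁺`; hence the effective stress-energy tensor has `t⁽⁰⁾₀₀ = 3A²/(16π)` and
`t⁽⁰⁾_{ij} = −(5A²/(16π))·δ_{ij}`, a `P = −(5/3)·ρ` fluid, neither traceless nor
satisfying the weak energy condition. -/
theorem effective_stress_energy_synge (A : ℝ) (hA : 0 < A) (i j : Fin 3)
    (f : (Fin 3 → ℝ) → ℝ) (hf : ContDiff ℝ 1 f) (hsupp : HasCompactSupport f) :
    Tendsto (fun lam : ℝ =>
        ∫ x : Fin 3 → ℝ, f x * (2 * lapPhiConf A lam x + gradSqPhiConf A lam x))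
      (nhdsWithin 0 (Set.Ioi 0))
      (nhds ((3 * A ^ 2 / 2) * ∫ x : Fin 3 → ℝ, f x)) ∧
    Tendsto (fun lam : ℝ =>
        ∫ x : Fin 3 → ℝ, f x *
          (2 * d2phiConf A lam i j x
            - 2 * (if i = j then (1:ℝ) else 0) * lapPhiConf A lam x
            - 2 * dphiConf A lam i x * dphiConf A lam j x
            - (if i = j then (1:ℝ) else 0) * gradSqPhiConf A lam x))
      (nhdsWithin 0 (Set.Ioi 0))
      (nhds (-(5 * A ^ 2 / 2) * (if i = j then (1:ℝ) else 0) * ∫ x : Fin 3 → ℝ, f x)) := by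
  classical
  have hfc : Continuous f := hf.continuous
  constructor
  · -- part (a)
    have base := combined_tendsto f hf hsupp (fun _ => -2 * A) (fun _ => A ^ 2)
    have hval : (∑ _k : Fin 3, (A ^ 2 : ℝ) * ((1 / 2) * ∫ x : Fin 3 → ℝ, f x))
        = (3 * A ^ 2 / 2) * ∫ x : Fin 3 → ℝ, f x := by
      simp [Finset.sum_const]
      ring
    rw [hval] at base
    apply base.congr'
    filter_upwards [self_mem_nhdsWithin] with lam (hl : 0 < lam)
    have hlam : lam ≠ 0 := ne_of_gt hl
    have hpt : ∀ x : Fin 3 → ℝ,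
        f x * (2 * lapPhiConf A lam x + gradSqPhiConf A lam x)
        = ∑ k : Fin 3, ((-2 * A) * (f x * (Real.sin (x k / lam) / lam))
            + A ^ 2 * (f x * Real.cos (x k / lam) ^ 2)) := by
      intro x
      rw [lapPhiConf_eq A hlam, gradSqPhiConf_eq A hlam]
      simp only [Fin.sum_univ_three]
      ring
    rw [← split_integral f hfc hsupp _ _ lam]
    exact integral_congr_ae (Filter.Eventually.of_forall fun x => (hpt x).symm)
  · -- part (b)
    by_cases hij : i = j
    · subst hij
      simp only [eq_self_iff_true, if_true]
      fin_cases i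
      · have base := combined_tendsto f hf hsupp ![0, 2 * A, 2 * A]
          ![-3 * A ^ 2, -(A ^ 2), -(A ^ 2)]
        have hval : (∑ k : Fin 3, (![-3 * A ^ 2, -(A ^ 2), -(A ^ 2)] : Fin 3 → ℝ) k
            * ((1 / 2) * ∫ x : Fin 3 → ℝ, f x))
            = -(5 * A ^ 2 / 2) * 1 * ∫ x : Fin 3 → ℝ, f x := by
          simp [Fin.sum_univ_three]
          ring
        rw [hval] at base
        apply base.congr'
        filter_upwards [self_mem_nhdsWithin] with lam (hl : 0 < lam)
        have hlam : lam ≠ 0 := ne_of_gt hl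
        have hpt : ∀ x : Fin 3 → ℝ,
            f x * (2 * d2phiConf A lam 0 0 x - 2 * 1 * lapPhiConf A lam x
              - 2 * dphiConf A lam 0 x * dphiConf A lam 0 x - 1 * gradSqPhiConf A lam x)
            = ∑ k : Fin 3, ((![0, 2 * A, 2 * A] : Fin 3 → ℝ) k
                * (f x * (Real.sin (x k / lam) / lam))
              + (![-3 * A ^ 2, -(A ^ 2), -(A ^ 2)] : Fin 3 → ℝ) k
                * (f x * Real.cos (x k / lam) ^ 2)) := by
          intro x
          rw [lapPhiConf_eq A hlam, gradSqPhiConf_eq A hlam, d2phiConf_eq A hlam,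
            dphiConf_eq A hlam]
          simp only [Fin.sum_univ_three, Matrix.cons_val_zero, Matrix.cons_val_one,
            Matrix.head_cons, Matrix.cons_val_two, Matrix.tail_cons, if_true,
            eq_self_iff_true]
          ring
        rw [← split_integral f hfc hsupp _ _ lam]
        exact integral_congr_ae (Filter.Eventually.of_forall fun x => (hpt x).symm)
      · have base := combined_tendsto f hf hsupp ![2 * A, 0, 2 * A]
          ![-(A ^ 2), -3 * A ^ 2, -(A ^ 2)]
        have hval : (∑ k : Fin 3, (![-(A ^ 2), -3 * A ^ 2, -(A ^ 2)] : Fin 3 → ℝ) k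
            * ((1 / 2) * ∫ x : Fin 3 → ℝ, f x))
            = -(5 * A ^ 2 / 2) * 1 * ∫ x : Fin 3 → ℝ, f x := by
          simp [Fin.sum_univ_three]
          ring
        rw [hval] at base
        apply base.congr'
        filter_upwards [self_mem_nhdsWithin] with lam (hl : 0 < lam)
        have hlam : lam ≠ 0 := ne_of_gt hl
        have hpt : ∀ x : Fin 3 → ℝ,
            f x * (2 * d2phiConf A lam 1 1 x - 2 * 1 * lapPhiConf A lam x
              - 2 * dphiConf A lam 1 x * dphiConf A lam 1 x - 1 * gradSqPhiConf A lam x)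
            = ∑ k : Fin 3, ((![2 * A, 0, 2 * A] : Fin 3 → ℝ) k
                * (f x * (Real.sin (x k / lam) / lam))
              + (![-(A ^ 2), -3 * A ^ 2, -(A ^ 2)] : Fin 3 → ℝ) k
                * (f x * Real.cos (x k / lam) ^ 2)) := by
          intro x
          rw [lapPhiConf_eq A hlam, gradSqPhiConf_eq A hlam, d2phiConf_eq A hlam,
            dphiConf_eq A hlam]
          simp only [Fin.sum_univ_three, Matrix.cons_val_zero, Matrix.cons_val_one,
            Matrix.head_cons, Matrix.cons_val_two, Matrix.tail_cons, if_true,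
            eq_self_iff_true]
          ring
        rw [← split_integral f hfc hsupp _ _ lam]
        exact integral_congr_ae (Filter.Eventually.of_forall fun x => (hpt x).symm)
      · have base := combined_tendsto f hf hsupp ![2 * A, 2 * A, 0]
          ![-(A ^ 2), -(A ^ 2), -3 * A ^ 2]
        have hval : (∑ k : Fin 3, (![-(A ^ 2), -(A ^ 2), -3 * A ^ 2] : Fin 3 → ℝ) k
            * ((1 / 2) * ∫ x : Fin 3 → ℝ, f x))
            = -(5 * A ^ 2 / 2) * 1 * ∫ x : Fin 3 → ℝ, f x := by
          simp [Fin.sum_univ_three]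
          ring
        rw [hval] at base
        apply base.congr'
        filter_upwards [self_mem_nhdsWithin] with lam (hl : 0 < lam)
        have hlam : lam ≠ 0 := ne_of_gt hl
        have hpt : ∀ x : Fin 3 → ℝ,
            f x * (2 * d2phiConf A lam 2 2 x - 2 * 1 * lapPhiConf A lam x
              - 2 * dphiConf A lam 2 x * dphiConf A lam 2 x - 1 * gradSqPhiConf A lam x)
            = ∑ k : Fin 3, ((![2 * A, 2 * A, 0] : Fin 3 → ℝ) k
                * (f x * (Real.sin (x k / lam) / lam))
              + (![-(A ^ 2), -(A ^ 2), -3 * A ^ 2] : Fin 3 → ℝ) k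
                * (f x * Real.cos (x k / lam) ^ 2)) := by
          intro x
          rw [lapPhiConf_eq A hlam, gradSqPhiConf_eq A hlam, d2phiConf_eq A hlam,
            dphiConf_eq A hlam]
          simp only [Fin.sum_univ_three, Matrix.cons_val_zero, Matrix.cons_val_one,
            Matrix.head_cons, Matrix.cons_val_two, Matrix.tail_cons, if_true,
            eq_self_iff_true]
          ring
        rw [← split_integral f hfc hsupp _ _ lam]
        exact integral_congr_ae (Filter.Eventually.of_forall fun x => (hpt x).symm)
    · rw [if_neg hij]
      set v1 : Fin 3 → ℝ := (Pi.single i 1 : Fin 3 → ℝ) - (Pi.single j 1 : Fin 3 → ℝ) with hv1d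
      set v2 : Fin 3 → ℝ := (Pi.single i 1 : Fin 3 → ℝ) + (Pi.single j 1 : Fin 3 → ℝ) with hv2d
      have hv1 : v1 ≠ 0 := by
        intro h
        have := congrFun h i
        simp [hv1d, Pi.single_apply, hij] at this
      have hv2 : v2 ≠ 0 := by
        intro h
        have := congrFun h i
        simp [hv2d, Pi.single_apply, hij] at this
      have hsum1 : ∀ x : Fin 3 → ℝ, (∑ m, v1 m * x m) = x i - x j := by
        intro x
        simp only [hv1d, Pi.sub_apply, sub_mul, Finset.sum_sub_distrib]
        rw [sum_single_mul, sum_single_mul]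
      have hsum2 : ∀ x : Fin 3 → ℝ, (∑ m, v2 m * x m) = x i + x j := by
        intro x
        simp only [hv2d, Pi.add_apply, add_mul, Finset.sum_add_distrib]
        rw [sum_single_mul, sum_single_mul]
      have hIc1 : ∀ lam : ℝ, Integrable (fun x : Fin 3 → ℝ =>
          f x * Real.cos ((∑ m, v1 m * x m) / lam)) := fun lam =>
        integ_mul hfc hsupp (by fun_prop)
      have hIc2 : ∀ lam : ℝ, Integrable (fun x : Fin 3 → ℝ =>
          f x * Real.cos ((∑ m, v2 m * x m) / lam)) := fun lam =>
        integ_mul hfc hsupp (by fun_prop)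
      have base : Tendsto (fun lam : ℝ =>
          (-(A ^ 2)) * (∫ x : Fin 3 → ℝ, f x * Real.cos ((∑ m, v1 m * x m) / lam))
            + (-(A ^ 2)) * (∫ x : Fin 3 → ℝ, f x * Real.cos ((∑ m, v2 m * x m) / lam)))
          (nhdsWithin 0 (Set.Ioi 0)) (nhds ((-(A ^ 2)) * 0 + (-(A ^ 2)) * 0)) :=
        ((rl_pi f hfc hsupp v1 hv1).const_mul (-(A ^ 2))).add
          ((rl_pi f hfc hsupp v2 hv2).const_mul (-(A ^ 2)))
      have hval : (-(A ^ 2)) * 0 + (-(A ^ 2)) * (0:ℝ)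
          = -(5 * A ^ 2 / 2) * 0 * ∫ x : Fin 3 → ℝ, f x := by ring
      rw [hval] at base
      apply base.congr'
      filter_upwards [self_mem_nhdsWithin] with lam (hl : 0 < lam)
      have hlam : lam ≠ 0 := ne_of_gt hl
      have hpt : ∀ x : Fin 3 → ℝ,
          f x * (2 * d2phiConf A lam i j x - 2 * 0 * lapPhiConf A lam x
            - 2 * dphiConf A lam i x * dphiConf A lam j x - 0 * gradSqPhiConf A lam x)
          = (-(A ^ 2)) * (f x * Real.cos ((∑ m, v1 m * x m) / lam))
            + (-(A ^ 2)) * (f x * Real.cos ((∑ m, v2 m * x m) / lam)) := by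
        intro x
        rw [d2phiConf_eq A hlam, if_neg hij, dphiConf_eq A hlam, dphiConf_eq A hlam,
          hsum1 x, hsum2 x, sub_div, add_div, Real.cos_sub, Real.cos_add]
        ring
      rw [← integral_const_mul, ← integral_const_mul,
        ← integral_add ((hIc1 lam).const_mul _) ((hIc2 lam).const_mul _)]
      exact integral_congr_ae (Filter.Eventually.of_forall fun x => (hpt x).symm)
end

section
/- Let f : ℝ² → ℝ be continuous with compact support, let a ≠ 0, b ≠ 0, and φ₁, φ₂ ∈ ℝ. Then lim_{N→∞} ∬_{ℝ²} f(τ,θ)·cos(a·N·e^{−τ} + φ₁)·cos(b·N·θ + φ₂) dτ dθ = 0. -/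
open Filter MeasureTheory

open Complex in
/-- Riemann–Lebesgue for cosine with phase. -/
lemma rl_cos_aux (h : ℝ → ℝ) (hi : Integrable h) (b : ℝ) (hb : b ≠ 0) (φ : ℝ) :
    Tendsto (fun N : ℕ => ∫ θ : ℝ, h θ * Real.cos (b * (N : ℝ) * θ + φ)) atTop (nhds 0) := by
  have key : Tendsto (fun w : ℝ => ∫ v : ℝ, Real.fourierChar (-(v * w)) • (h v : ℂ))
      (cocompact ℝ) (nhds 0) := Real.tendsto_integral_exp_smul_cocompact _
  have hπ : (0:ℝ) < 2 * Real.pi := by positivity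
  have hNat : Tendsto (fun N : ℕ => (N : ℝ)) atTop atTop := tendsto_natCast_atTop_atTop
  have hw : Tendsto (fun N : ℕ => -(b * (N : ℝ)) / (2 * Real.pi)) atTop (cocompact ℝ) := by
    rw [cocompact_eq_atBot_atTop]
    rcases hb.lt_or_gt with h1 | h1
    · have hc : 0 < -b / (2 * Real.pi) := by
        apply div_pos (by linarith) hπ
      exact ((hNat.const_mul_atTop hc).congr (fun N => by ring)).mono_right le_sup_right
    · have hc : 0 < b / (2 * Real.pi) := div_pos h1 hπ
      have h2 : Tendsto (fun N : ℕ => -((b / (2 * Real.pi)) * (N : ℝ))) atTop atBot :=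
        tendsto_neg_atTop_atBot.comp (hNat.const_mul_atTop hc)
      exact (h2.congr (fun N => by ring)).mono_right le_sup_left
  have comp := key.comp hw
  have comp2 : Tendsto (fun N : ℕ => (Complex.exp (φ * Complex.I) *
      ∫ v : ℝ, Real.fourierChar (-(v * (-(b * (N:ℝ)) / (2 * Real.pi)))) • (h v : ℂ)).re)
      atTop (nhds 0) := by
    have h1 := comp.const_mul (Complex.exp (φ * Complex.I))
    rw [mul_zero] at h1
    have h2 := (Complex.continuous_re.tendsto 0).comp h1
    simp only [Complex.zero_re] at h2
    exact h2
  refine comp2.congr (fun N => ?_)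
  have hIc : Integrable (fun v : ℝ =>
      Complex.exp ((b * (N:ℝ) * v + φ : ℝ) * Complex.I) * (h v : ℂ)) := by
    refine Integrable.bdd_mul hi.ofReal
      (Complex.continuous_exp.comp (by continuity)).aestronglyMeasurable
      (c := 1) (Eventually.of_forall fun v => ?_)
    simp [Complex.norm_exp]
  have step1 : (Complex.exp (φ * Complex.I) *
      ∫ v : ℝ, Real.fourierChar (-(v * (-(b * (N:ℝ)) / (2 * Real.pi)))) • (h v : ℂ)) =
      ∫ v : ℝ, Complex.exp ((b * (N:ℝ) * v + φ : ℝ) * Complex.I) * (h v : ℂ) := by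
    rw [← integral_const_mul]
    congr 1
    funext v
    rw [Circle.smul_def, Real.fourierChar_apply, smul_eq_mul, ← mul_assoc, ← Complex.exp_add]
    congr 2
    have : (2 * Real.pi) * (-(v * (-(b * (N:ℝ)) / (2 * Real.pi)))) = b * (N:ℝ) * v := by
      field_simp
    push_cast [this]
    ring
  rw [step1]
  have step2 : (∫ θ : ℝ, h θ * Real.cos (b * (N:ℝ) * θ + φ)) =
      ∫ v : ℝ, Complex.re (Complex.exp ((b * (N:ℝ) * v + φ : ℝ) * Complex.I) * (h v : ℂ)) := by
    congr 1
    funext v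
    simp only [Complex.mul_re, Complex.exp_ofReal_mul_I_re, Complex.exp_ofReal_mul_I_im,
      Complex.ofReal_re, Complex.ofReal_im, mul_zero, sub_zero]
    ring
  rw [step2]
  exact (integral_re hIc).symm


lemma slice_int (g : ℝ × ℝ → ℝ) (hg : Continuous g) (hgs : HasCompactSupport g) (τ : ℝ) :
    Integrable (fun θ => g (τ, θ)) := by
  apply Continuous.integrable_of_hasCompactSupport (hg.comp (Continuous.prodMk_right τ))
  rw [hasCompactSupport_def]
  refine IsCompact.of_isClosed_subset ((hgs.image continuous_snd)) isClosed_closure ?_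
  have h1 : Function.support (fun θ => g (τ, θ)) ⊆ Prod.snd '' (tsupport g) :=
    fun θ hθ => ⟨(τ, θ), subset_tsupport g hθ, rfl⟩
  calc closure (Function.support fun θ => g (τ, θ))
      ⊆ closure (Prod.snd '' (tsupport g)) := closure_mono h1
    _ = Prod.snd '' (tsupport g) :=
        IsClosed.closure_eq ((hgs.image continuous_snd).isClosed)

/-- For continuous compactly supported `f : ℝ² → ℝ`, `a ≠ 0`,
`b ≠ 0`, and phases `φ₁, φ₂`, the two-frequency oscillatory integrals vanish in the
limit: `∬ f(τ,θ)·cos(a·N·e^{−τ} + φ₁)·cos(b·N·θ + φ₂) dτ dθ → 0` as `N → ∞`. -/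
theorem wlim_cross_phase (f : ℝ × ℝ → ℝ) (hf : Continuous f)
    (hsupp : HasCompactSupport f) (a b : ℝ) (ha : a ≠ 0) (hb : b ≠ 0) (φ₁ φ₂ : ℝ) :
    Tendsto (fun N : ℕ =>
        ∫ p : ℝ × ℝ, f p * Real.cos (a * (N : ℝ) * Real.exp (-p.1) + φ₁)
          * Real.cos (b * (N : ℝ) * p.2 + φ₂))
      atTop (nhds 0) := by
  -- the integrand and its properties
  set F : ℕ → ℝ × ℝ → ℝ := fun N p =>
    f p * Real.cos (a * (N : ℝ) * Real.exp (-p.1) + φ₁)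
      * Real.cos (b * (N : ℝ) * p.2 + φ₂) with hF
  have hFcont : ∀ N, Continuous (F N) := by
    intro N
    apply Continuous.mul
    · exact hf.mul (Real.continuous_cos.comp (by continuity))
    · exact Real.continuous_cos.comp (by continuity)
  have hFsupp : ∀ N, HasCompactSupport (F N) := by
    intro N
    apply HasCompactSupport.intro hsupp
    intro p hp
    simp only [hF]
    rw [image_eq_zero_of_notMem_tsupport hp]
    ring
  have hFint : ∀ N, Integrable (F N) := fun N =>
    (hFcont N).integrable_of_hasCompactSupport (hFsupp N)
  have hFintP : ∀ N, Integrable (F N) ((volume : Measure ℝ).prod volume) := by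
    intro N; rw [← MeasureTheory.Measure.volume_eq_prod ℝ ℝ]; exact hFint N
  have hsliceInt : ∀ τ : ℝ, Integrable (fun θ => f (τ, θ)) :=
    fun τ => slice_int f hf hsupp τ
  -- rewrite double integral via Fubini
  have hFub : ∀ N : ℕ, (∫ p : ℝ × ℝ, F N p) = ∫ τ : ℝ, ∫ θ : ℝ, F N (τ, θ) := by
    intro N
    rw [MeasureTheory.Measure.volume_eq_prod ℝ ℝ, MeasureTheory.integral_prod _ (hFintP N)]
  have goal_eq : (fun N : ℕ => ∫ p : ℝ × ℝ, F N p) =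
      fun N : ℕ => ∫ τ : ℝ, ∫ θ : ℝ, F N (τ, θ) := funext hFub
  show Tendsto (fun N : ℕ => ∫ p : ℝ × ℝ, F N p) atTop (nhds 0)
  rw [goal_eq]
  have h0 : (0 : ℝ) = ∫ τ : ℝ, (0 : ℝ) := by simp
  rw [h0]
  -- dominated convergence
  apply tendsto_integral_of_dominated_convergence (fun τ => ∫ θ : ℝ, ‖f (τ, θ)‖)
  · intro N
    exact (hFintP N).1.integral_prod_right'
  · have : Integrable (fun p : ℝ × ℝ => f p) ((volume : Measure ℝ).prod volume) := by
      rw [← MeasureTheory.Measure.volume_eq_prod ℝ ℝ]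
      exact hf.integrable_of_hasCompactSupport hsupp
    exact this.integral_norm_prod_left
  · intro N
    refine Eventually.of_forall (fun τ => ?_)
    refine (norm_integral_le_integral_norm _).trans ?_
    apply integral_mono (slice_int (F N) (hFcont N) (hFsupp N) τ).norm
      ((hsliceInt τ).norm)
    · intro θ
      simp only [hF, norm_mul, Real.norm_eq_abs]
      calc |f (τ, θ)| * |Real.cos (a * (N : ℝ) * Real.exp (-τ) + φ₁)| *
            |Real.cos (b * (N : ℝ) * θ + φ₂)|
          ≤ |f (τ, θ)| * 1 * 1 := by
            apply mul_le_mul (mul_le_mul le_rfl (Real.abs_cos_le_one _)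
              (abs_nonneg _) (abs_nonneg _)) (Real.abs_cos_le_one _) (abs_nonneg _)
            positivity
        _ = |f (τ, θ)| := by ring
  · refine Eventually.of_forall (fun τ => ?_)
    have hrl := rl_cos_aux (fun θ => f (τ, θ)) (hsliceInt τ) b hb φ₂
    apply squeeze_zero_norm (a := fun N : ℕ =>
      ‖∫ θ : ℝ, f (τ, θ) * Real.cos (b * (N : ℝ) * θ + φ₂)‖)
    · intro N
      have hpull : (∫ θ : ℝ, F N (τ, θ)) =
          Real.cos (a * (N : ℝ) * Real.exp (-τ) + φ₁) *
            ∫ θ : ℝ, f (τ, θ) * Real.cos (b * (N : ℝ) * θ + φ₂) := by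
        rw [← integral_const_mul]
        congr 1
        funext θ
        simp only [hF]
        ring
      rw [hpull, norm_mul]
      calc ‖Real.cos (a * (N : ℝ) * Real.exp (-τ) + φ₁)‖ *
            ‖∫ θ : ℝ, f (τ, θ) * Real.cos (b * (N : ℝ) * θ + φ₂)‖
          ≤ 1 * ‖∫ θ : ℝ, f (τ, θ) * Real.cos (b * (N : ℝ) * θ + φ₂)‖ := by
            apply mul_le_mul_of_nonneg_right _ (norm_nonneg _)
            exact Real.abs_cos_le_one _
        _ = _ := one_mul _
    · simpa using hrl.norm
end
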